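/- Let ⋆ be an involution on the Heisenberg group Γ. Then there exists an automorphism φ of Γ such that the involution † on Γ defined by g† = φ((φ⁻¹(g))⋆) is of one of the following four types: (I) there exist integers m, n with x† = λ^m·x and y† = λ^n·y; (II) x† = x⁻¹ and y† = y⁻¹; (III) there exists an integer m with x† = x and y† = λ^m·y⁻¹; (IV) there exists an integer m with x† = λ^m·y and y† = λ^{−m}·x. -/

import Mathlib

/-- The commutator `g⁻¹h⁻¹gh` used in the paper's convention. -/
def commS {G : Type*} [Group G] (g h : G) : G := g⁻¹ * h⁻¹ * g * h

/-- Relations of the Heisenberg group: `[[x,y],x] = [[x,y],y] = 1`. -/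
def heisRels : Set (FreeGroup (Fin 2)) :=
  { commS (commS (FreeGroup.of 0) (FreeGroup.of 1)) (FreeGroup.of 0),
    commS (commS (FreeGroup.of 0) (FreeGroup.of 1)) (FreeGroup.of 1) }

/-- The Heisenberg group, presented by `x, y` with `[[x,y],x] = [[x,y],y] = 1`. -/
abbrev Heisenberg : Type := PresentedGroup heisRels

/-- The generator `x` of the Heisenberg group. -/
def Hx : Heisenberg := PresentedGroup.of 0

/-- The generator `y` of the Heisenberg group. -/
def Hy : Heisenberg := PresentedGroup.of 1

/-- The central element `λ = [x,y]`. -/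
def Hlam : Heisenberg := commS Hx Hy

/-- A pair of elements of a group is free if the induced map from the free group
on two generators is injective. -/
def IsFreePair {G : Type*} [Group G] (u v : G) : Prop :=
  Function.Injective ⇑(FreeGroup.lift (fun b : Bool => if b then u else v) : FreeGroup Bool →* G)


namespace HeisAux



def T (n : ℤ) : ℤ := n * (n - 1) / 2

lemma two_T (n : ℤ) : 2 * T n = n * (n - 1) := by
  have h : (2:ℤ) ∣ n * (n - 1) := by
    have h2 := Int.even_mul_succ_self (n - 1)
    have : (n-1) * (n - 1 + 1) = n * (n-1) := by ring
    rw [this] at h2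
    exact h2.two_dvd
  rw [T, Int.mul_ediv_cancel' h]

lemma T_add (a b : ℤ) : T (a + b) = T a + T b + a * b := by
  have key : 2 * T (a+b) = 2 * (T a + T b + a * b) := by
    linear_combination two_T (a+b) - two_T a - two_T b
  exact mul_left_cancel₀ two_ne_zero key

@[simp] lemma T_zero : T 0 = 0 := rfl
@[simp] lemma T_one : T 1 = 0 := rfl

lemma T_sub_one (n : ℤ) : T (n - 1) = T n - n + 1 := by
  have := T_add (n-1) 1
  simp at this; omega

lemma T_add_one (n : ℤ) : T (n + 1) = T n + n := by
  have := T_add n 1; simp at this; omega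

/-- concrete model of the Heisenberg group -/
@[ext] structure M where
  a : ℤ
  b : ℤ
  c : ℤ
deriving DecidableEq

instance : Mul M := ⟨fun g h => ⟨g.a + h.a, g.b + h.b, g.c + h.c - h.a * g.b⟩⟩
instance : One M := ⟨⟨0,0,0⟩⟩
instance : Inv M := ⟨fun g => ⟨-g.a, -g.b, -g.c - g.a * g.b⟩⟩

lemma mul_def (g h : M) : g * h = ⟨g.a + h.a, g.b + h.b, g.c + h.c - h.a * g.b⟩ := rfl
lemma one_def : (1 : M) = ⟨0,0,0⟩ := rfl
lemma inv_def (g : M) : g⁻¹ = ⟨-g.a, -g.b, -g.c - g.a * g.b⟩ := rfl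

instance : Group M where
  mul_assoc g h k := by ext <;> simp [mul_def] <;> ring
  one_mul g := by ext <;> simp [mul_def, one_def]
  mul_one g := by ext <;> simp [mul_def, one_def]
  inv_mul_cancel g := by ext <;> simp [mul_def, one_def, inv_def] <;> ring

def xM : M := ⟨1,0,0⟩
def yM : M := ⟨0,1,0⟩
def lamM : M := ⟨0,0,1⟩

lemma zpow_def (g : M) (n : ℤ) : g ^ n = ⟨n * g.a, n * g.b, n * g.c - g.a * g.b * T n⟩ := by
  induction n using Int.induction_on with
  | zero => simp [one_def]
  | succ k ih => rw [zpow_add_one, ih]; ext <;> simp [mul_def, T_add_one] <;> ring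
  | pred k ih => rw [zpow_sub_one, ih]; ext <;> simp [mul_def, inv_def, T_sub_one] <;> ring

lemma triple_decomp (a b c : ℤ) : (⟨a,b,c⟩ : M) = xM ^ a * yM ^ b * lamM ^ c := by
  ext <;> simp [zpow_def, mul_def, xM, yM, lamM]


end HeisAux

namespace HeisAux

lemma mk_rel_one {r : FreeGroup (Fin 2)} (hr : r ∈ heisRels) :
    PresentedGroup.mk heisRels r = 1 :=
  (QuotientGroup.eq_one_iff _).2 (Subgroup.subset_normalClosure hr)

lemma rel1 : commS (commS Hx Hy) Hx = 1 := by
  have := mk_rel_one (r := commS (commS (FreeGroup.of 0) (FreeGroup.of 1)) (FreeGroup.of 0))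
    (by left; rfl)
  simpa [commS, Hx, Hy, PresentedGroup.of, map_mul, map_inv] using this

lemma rel2 : commS (commS Hx Hy) Hy = 1 := by
  have := mk_rel_one (r := commS (commS (FreeGroup.of 0) (FreeGroup.of 1)) (FreeGroup.of 1))
    (by right; rfl)
  simpa [commS, Hx, Hy, PresentedGroup.of, map_mul, map_inv] using this

lemma comm_lam_x : Commute Hlam Hx := by
  have h := rel1
  rw [commS] at h
  have : Hlam⁻¹ * Hx⁻¹ * Hlam * Hx = 1 := h
  have h2 : Hx⁻¹ * Hlam * Hx = Hlam := by
    calc Hx⁻¹ * Hlam * Hx = Hlam * (Hlam⁻¹ * Hx⁻¹ * Hlam * Hx) := by group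
    _ = Hlam := by rw [this]; group
  unfold Commute SemiconjBy
  calc Hlam * Hx = Hx * (Hx⁻¹ * Hlam * Hx) := by group
  _ = Hx * Hlam := by rw [h2]

lemma comm_lam_y : Commute Hlam Hy := by
  have h := rel2
  rw [commS] at h
  have : Hlam⁻¹ * Hy⁻¹ * Hlam * Hy = 1 := h
  have h2 : Hy⁻¹ * Hlam * Hy = Hlam := by
    calc Hy⁻¹ * Hlam * Hy = Hlam * (Hlam⁻¹ * Hy⁻¹ * Hlam * Hy) := by group
    _ = Hlam := by rw [this]; group
  unfold Commute SemiconjBy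
  calc Hlam * Hy = Hy * (Hy⁻¹ * Hlam * Hy) := by group
  _ = Hy * Hlam := by rw [h2]

lemma yx_swap : Hy * Hx = Hx * Hy * Hlam⁻¹ := by
  rw [Hlam, commS]; group

end HeisAux

namespace HeisAux

lemma clx (a : ℤ) : Commute (Hlam ^ a) Hx := (comm_lam_x.zpow_left a)
lemma cly (a : ℤ) : Commute (Hlam ^ a) Hy := (comm_lam_y.zpow_left a)

lemma yx_swap' : Hy * Hx⁻¹ = Hx⁻¹ * Hy * Hlam := by
  have h : Hx * Hy = Hy * Hlam * Hx := by
    calc Hx * Hy = (Hy * Hx) * Hlam := by rw [yx_swap]; group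
      _ = Hy * (Hx * Hlam) := by group
      _ = Hy * Hlam * Hx := by rw [← comm_lam_x.eq]; group
  calc Hy * Hx⁻¹ = Hx⁻¹ * (Hx * Hy) * Hx⁻¹ := by group
    _ = Hx⁻¹ * (Hy * Hlam * Hx) * Hx⁻¹ := by rw [h]
    _ = Hx⁻¹ * Hy * Hlam := by group

lemma y_xpow (a : ℤ) : Hy * Hx ^ a = Hx ^ a * Hy * Hlam ^ (-a) := by
  induction a using Int.induction_on with
  | zero => simp
  | succ k ih =>
      calc Hy * Hx ^ ((k:ℤ) + 1) = (Hy * Hx ^ (k:ℤ)) * Hx := by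
            rw [zpow_add_one, mul_assoc]
        _ = Hx ^ (k:ℤ) * Hy * (Hlam ^ (-(k:ℤ)) * Hx) := by rw [ih, mul_assoc]
        _ = Hx ^ (k:ℤ) * (Hy * Hx) * Hlam ^ (-(k:ℤ)) := by
            rw [(clx (-(k:ℤ))).eq]; group
        _ = Hx ^ (k:ℤ) * (Hx * Hy * Hlam⁻¹) * Hlam ^ (-(k:ℤ)) := by rw [yx_swap]
        _ = Hx ^ ((k:ℤ)+1) * Hy * (Hlam⁻¹ * Hlam ^ (-(k:ℤ))) := by
            rw [zpow_add_one]; group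
        _ = Hx ^ ((k:ℤ)+1) * Hy * Hlam ^ (-((k:ℤ)+1)) := by
            rw [show (-((k:ℤ)+1)) = -1 + -(k:ℤ) by ring, zpow_add Hlam, zpow_neg_one]
  | pred k ih =>
      calc Hy * Hx ^ (-(k:ℤ) - 1) = (Hy * Hx ^ (-(k:ℤ))) * Hx⁻¹ := by
            rw [zpow_sub_one, mul_assoc]
        _ = Hx ^ (-(k:ℤ)) * Hy * (Hlam ^ ((k:ℤ)) * Hx⁻¹) := by
            rw [ih, mul_assoc]; norm_num
        _ = Hx ^ (-(k:ℤ)) * (Hy * Hx⁻¹) * Hlam ^ ((k:ℤ)) := by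
            rw [((clx (k:ℤ)).inv_right).eq]; group
        _ = Hx ^ (-(k:ℤ)) * (Hx⁻¹ * Hy * Hlam) * Hlam ^ ((k:ℤ)) := by rw [yx_swap']
        _ = Hx ^ (-(k:ℤ)-1) * Hy * (Hlam * Hlam ^ ((k:ℤ))) := by
            rw [zpow_sub_one]; group
        _ = Hx ^ (-(k:ℤ)-1) * Hy * Hlam ^ (-(-(k:ℤ)-1)) := by
            rw [show (-(-(k:ℤ)-1)) = 1 + (k:ℤ) by ring, zpow_add, zpow_one]

lemma ypow_xpow (b a : ℤ) : Hy ^ b * Hx ^ a = Hx ^ a * Hy ^ b * Hlam ^ (-(a*b)) := by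
  induction b using Int.induction_on with
  | zero => simp
  | succ k ih =>
      calc Hy ^ ((k:ℤ)+1) * Hx ^ a = Hy ^ (k:ℤ) * (Hy * Hx ^ a) := by
            rw [zpow_add_one]; group
        _ = Hy ^ (k:ℤ) * (Hx ^ a * Hy * Hlam ^ (-a)) := by rw [y_xpow]
        _ = (Hy ^ (k:ℤ) * Hx ^ a) * Hy * Hlam ^ (-a) := by group
        _ = Hx ^ a * Hy ^ (k:ℤ) * Hlam ^ (-(a*k)) * Hy * Hlam ^ (-a) := by rw [ih]
        _ = Hx ^ a * Hy ^ (k:ℤ) * Hy * (Hlam ^ (-(a*k)) * Hlam ^ (-a)) := by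
            rw [mul_assoc (Hx ^ a * Hy ^ (k:ℤ)), (cly (-(a*k))).eq]; group
        _ = Hx ^ a * Hy ^ ((k:ℤ)+1) * Hlam ^ (-(a*((k:ℤ)+1))) := by
            rw [show (-(a*((k:ℤ)+1))) = -(a*(k:ℤ)) + -a by ring, zpow_add Hlam,
              zpow_add_one Hy]
            group
  | pred k ih =>
      have key : Hy * (Hx ^ a * Hy⁻¹ * Hlam ^ a) = Hx ^ a := by
        calc Hy * (Hx ^ a * Hy⁻¹ * Hlam ^ a) = (Hy * Hx ^ a) * (Hy⁻¹ * Hlam ^ a) := by group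
          _ = Hx ^ a * Hy * (Hlam ^ (-a) * Hy⁻¹) * Hlam ^ a := by rw [y_xpow]; group
          _ = Hx ^ a * Hy * Hy⁻¹ * (Hlam ^ (-a) * Hlam ^ a) := by
              rw [((cly (-a)).inv_right).eq]; group
          _ = Hx ^ a := by rw [← zpow_add]; norm_num
      have hyinv : Hy⁻¹ * Hx ^ a = Hx ^ a * Hy⁻¹ * Hlam ^ a := by
        calc Hy⁻¹ * Hx ^ a = Hy⁻¹ * (Hy * (Hx ^ a * Hy⁻¹ * Hlam ^ a)) := by rw [key]
          _ = Hx ^ a * Hy⁻¹ * Hlam ^ a := by group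
      calc Hy ^ (-(k:ℤ)-1) * Hx ^ a = Hy ^ (-(k:ℤ)) * (Hy⁻¹ * Hx ^ a) := by
            rw [zpow_sub_one]; group
        _ = Hy ^ (-(k:ℤ)) * (Hx ^ a * Hy⁻¹ * Hlam ^ a) := by rw [hyinv]
        _ = (Hy ^ (-(k:ℤ)) * Hx ^ a) * Hy⁻¹ * Hlam ^ a := by group
        _ = Hx ^ a * Hy ^ (-(k:ℤ)) * Hlam ^ (-(a * (-(k:ℤ)))) * Hy⁻¹ * Hlam ^ a := by rw [ih]
        _ = Hx ^ a * Hy ^ (-(k:ℤ)) * Hy⁻¹ * (Hlam ^ (a * (k:ℤ)) * Hlam ^ a) := by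
            rw [show (-(a * (-(k:ℤ)))) = a * (k:ℤ) by ring,
              mul_assoc (Hx ^ a * Hy ^ (-(k:ℤ))), ((cly (a*(k:ℤ))).inv_right).eq]
            group
        _ = Hx ^ a * Hy ^ (-(k:ℤ)-1) * Hlam ^ (-(a * (-(k:ℤ)-1))) := by
            rw [show (-(a * (-(k:ℤ)-1))) = a*(k:ℤ) + a by ring, zpow_add Hlam,
              zpow_sub_one Hy]
            group

end HeisAux

namespace HeisAux

def N (a b c : ℤ) : Heisenberg := Hx ^ a * Hy ^ b * Hlam ^ c

lemma N_mul (a b c a' b' c' : ℤ) :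
    N a b c * N a' b' c' = N (a+a') (b+b') (c + c' - a'*b) := by
  calc N a b c * N a' b' c'
      = Hx^a * Hy^b * (Hlam^c * Hx^a') * Hy^b' * Hlam^c' := by rw [N, N]; group
    _ = Hx^a * (Hy^b * Hx^a') * (Hlam^c * Hy^b') * Hlam^c' := by
        rw [((clx c).zpow_right a').eq]; group
    _ = Hx^a * (Hx^a' * Hy^b * Hlam^(-(a'*b))) * (Hy^b' * Hlam^c) * Hlam^c' := by
        rw [ypow_xpow, ((cly c).zpow_right b').eq]
    _ = Hx^a * Hx^a' * Hy^b * (Hlam^(-(a'*b)) * Hy^b') * (Hlam^c * Hlam^c') := by group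
    _ = Hx^a * Hx^a' * Hy^b * (Hy^b' * Hlam^(-(a'*b))) * (Hlam^c * Hlam^c') := by
        rw [((cly (-(a'*b))).zpow_right b').eq]
    _ = N (a+a') (b+b') (c + c' - a'*b) := by
        rw [N, zpow_add Hx, zpow_add Hy, show c + c' - a'*b = -(a'*b) + (c + c') by ring,
          zpow_add Hlam, zpow_add Hlam]
        group

lemma N_one : N 0 0 0 = 1 := by rw [N]; group

lemma N_inv (a b c : ℤ) : (N a b c)⁻¹ = N (-a) (-b) (-c - a*b) := by
  have h : N a b c * N (-a) (-b) (-c - a*b) = 1 := by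
    rw [N_mul, show a + -a = 0 by ring, show b + -b = 0 by ring,
      show c + (-c - a*b) - -a*b = 0 by ring, N_one]
  exact (eq_inv_of_mul_eq_one_right h).symm

def NF : Subgroup Heisenberg where
  carrier := { g | ∃ a b c : ℤ, g = N a b c }
  one_mem' := ⟨0, 0, 0, N_one.symm⟩
  mul_mem' := by
    rintro g h ⟨a, b, c, rfl⟩ ⟨a', b', c', rfl⟩
    exact ⟨a+a', b+b', c + c' - a'*b, N_mul a b c a' b' c'⟩
  inv_mem' := by
    rintro g ⟨a, b, c, rfl⟩
    exact ⟨-a, -b, -c - a*b, N_inv a b c⟩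

lemma exists_NF (g : Heisenberg) : ∃ a b c : ℤ, g = N a b c := by
  refine PresentedGroup.generated_by heisRels NF ?_ g
  intro j
  fin_cases j
  · refine ⟨1, 0, 0, ?_⟩
    rw [N]; group
    rfl
  · refine ⟨0, 1, 0, ?_⟩
    rw [N]; group
    rfl

def fmap : Fin 2 → M := ![xM, yM]

lemma hrels : ∀ r ∈ heisRels, FreeGroup.lift fmap r = 1 := by
  intro r hr
  rcases hr with rfl | rfl <;>
    · simp [commS, map_mul, map_inv, fmap]
      decide

def fH : Heisenberg →* M := PresentedGroup.toGroup hrels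

lemma fH_x : fH Hx = xM := by
  show PresentedGroup.toGroup hrels (PresentedGroup.of 0) = xM
  rw [PresentedGroup.toGroup.of hrels]
  rfl

lemma fH_y : fH Hy = yM := by
  show PresentedGroup.toGroup hrels (PresentedGroup.of 1) = yM
  rw [PresentedGroup.toGroup.of hrels]
  rfl

lemma fH_lam : fH Hlam = lamM := by
  rw [Hlam, commS, map_mul, map_mul, map_mul, map_inv, map_inv, fH_x, fH_y]
  decide

lemma fH_N (a b c : ℤ) : fH (N a b c) = ⟨a, b, c⟩ := by
  rw [N, map_mul, map_mul, map_zpow, map_zpow, map_zpow, fH_x, fH_y, fH_lam,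
    triple_decomp]

lemma fH_bij : Function.Bijective fH := by
  constructor
  · intro g₁ g₂ h
    obtain ⟨a₁, b₁, c₁, rfl⟩ := exists_NF g₁
    obtain ⟨a₂, b₂, c₂, rfl⟩ := exists_NF g₂
    rw [fH_N, fH_N] at h
    cases h; rfl
  · intro m
    exact ⟨N m.a m.b m.c, by rw [fH_N]⟩

noncomputable def eH : Heisenberg ≃* M := MulEquiv.ofBijective fH fH_bij

lemma eH_x : eH Hx = xM := fH_x
lemma eH_y : eH Hy = yM := fH_y
lemma eH_lam : eH Hlam = lamM := fH_lam
lemma eH_symm_x : eH.symm xM = Hx := by rw [← eH_x, MulEquiv.symm_apply_apply]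
lemma eH_symm_y : eH.symm yM = Hy := by rw [← eH_y, MulEquiv.symm_apply_apply]
lemma eH_symm_lam : eH.symm lamM = Hlam := by rw [← eH_lam, MulEquiv.symm_apply_apply]

end HeisAux

namespace HeisAux

/-! ### Phi automorphisms of the model -/

def Phi (p q r s u v : ℤ) (g : M) : M :=
  ⟨p*g.a + q*g.b, r*g.a + s*g.b,
   (p*s - q*r)*g.c - p*r*T g.a - q*s*T g.b - q*r*g.a*g.b + u*g.a + v*g.b⟩

lemma Phi_mul (p q r s u v : ℤ) (g h : M) :
    Phi p q r s u v (g * h) = Phi p q r s u v g * Phi p q r s u v h := by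
  ext <;> simp [Phi, mul_def, T_add] <;> ring

lemma Phi_x (p q r s u v : ℤ) : Phi p q r s u v xM = ⟨p, r, u⟩ := by
  ext <;> simp [Phi, xM]

lemma Phi_y (p q r s u v : ℤ) : Phi p q r s u v yM = ⟨q, s, v⟩ := by
  ext <;> simp [Phi, yM]

lemma Phi_c_split (p q r s u v a b c : ℤ) :
    (Phi p q r s u v ⟨a,b,c⟩).c = (p*s - q*r)*c + (Phi p q r s u v ⟨a,b,0⟩).c := by
  simp [Phi]; ring

lemma Phi_inj (p q r s u v : ℤ) (hdet : p*s - q*r = 1 ∨ p*s - q*r = -1) :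
    Function.Injective (Phi p q r s u v) := by
  intro g h hgh
  have h1 : p*g.a + q*g.b = p*h.a + q*h.b := congrArg M.a hgh
  have h2 : r*g.a + s*g.b = r*h.a + s*h.b := congrArg M.b hgh
  have hda : (p*s - q*r) * (g.a - h.a) = 0 := by linear_combination s*h1 - q*h2
  have hdb : (p*s - q*r) * (g.b - h.b) = 0 := by linear_combination p*h2 - r*h1
  have ha : g.a = h.a := by rcases hdet with hd | hd <;> rw [hd] at hda <;> linarith
  have hb : g.b = h.b := by rcases hdet with hd | hd <;> rw [hd] at hdb <;> linarith
  have h3 : (p*s - q*r)*g.c - p*r*T g.a - q*s*T g.b - q*r*g.a*g.b + u*g.a + v*g.b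
      = (p*s - q*r)*h.c - p*r*T h.a - q*s*T h.b - q*r*h.a*h.b + u*h.a + v*h.b :=
    congrArg M.c hgh
  have hc : g.c = h.c := by
    rw [ha, hb] at h3
    have hdc : (p*s - q*r) * (g.c - h.c) = 0 := by linear_combination h3
    rcases hdet with hd | hd <;> rw [hd] at hdc <;> linarith
  ext <;> assumption

lemma Phi_surj (p q r s u v : ℤ) (hdet : p*s - q*r = 1 ∨ p*s - q*r = -1) :
    Function.Surjective (Phi p q r s u v) := by
  have hd2 : (p*s - q*r) * (p*s - q*r) = 1 := by
    rcases hdet with hd | hd <;> rw [hd] <;> ring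
  intro g
  set d := p*s - q*r with hd
  refine ⟨⟨d*(s*g.a - q*g.b), d*(p*g.b - r*g.a),
    d*(g.c - (Phi p q r s u v ⟨d*(s*g.a - q*g.b), d*(p*g.b - r*g.a), 0⟩).c)⟩, ?_⟩
  have h3 := Phi_c_split p q r s u v (d*(s*g.a - q*g.b)) (d*(p*g.b - r*g.a))
    (d*(g.c - (Phi p q r s u v ⟨d*(s*g.a - q*g.b), d*(p*g.b - r*g.a), 0⟩).c))
  ext
  · show p*(d*(s*g.a - q*g.b)) + q*(d*(p*g.b - r*g.a)) = g.a
    linear_combination g.a * hd2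
  · show r*(d*(s*g.a - q*g.b)) + s*(d*(p*g.b - r*g.a)) = g.b
    linear_combination g.b * hd2
  · rw [h3]
    linear_combination (g.c - (Phi p q r s u v
      ⟨d*(s*g.a - q*g.b), d*(p*g.b - r*g.a), 0⟩).c) * hd2

def PhiHom (p q r s u v : ℤ) : M →* M := MonoidHom.mk' (Phi p q r s u v) (Phi_mul p q r s u v)

noncomputable def PhiEquiv (p q r s u v : ℤ) (hdet : p*s - q*r = 1 ∨ p*s - q*r = -1) :
    M ≃* M :=
  MulEquiv.ofBijective (PhiHom p q r s u v) ⟨Phi_inj p q r s u v hdet, Phi_surj p q r s u v hdet⟩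

lemma PhiEquiv_apply (p q r s u v : ℤ) (hdet) (g : M) :
    PhiEquiv p q r s u v hdet g = Phi p q r s u v g := rfl

/-! ### anti-homomorphism lemmas -/

section Anti

variable {S : M → M}

lemma anti_one (hmul : ∀ g h, S (g * h) = S h * S g) : S 1 = 1 := by
  have h := hmul 1 1
  rw [mul_one] at h
  exact right_eq_mul.mp h

lemma anti_inv (hmul : ∀ g h, S (g * h) = S h * S g) (g : M) : S g⁻¹ = (S g)⁻¹ := by
  have h := hmul g⁻¹ g
  rw [inv_mul_cancel, anti_one hmul] at h
  exact eq_inv_of_mul_eq_one_right h.symm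

lemma anti_zpow (hmul : ∀ g h, S (g * h) = S h * S g) (g : M) (n : ℤ) :
    S (g ^ n) = (S g) ^ n := by
  induction n using Int.induction_on with
  | zero => simpa using anti_one hmul
  | succ k ih =>
      rw [zpow_add_one, hmul, ih]; group
  | pred k ih =>
      rw [zpow_sub_one, hmul, ih, anti_inv hmul]; group

lemma anti_triple (hmul : ∀ g h, S (g * h) = S h * S g) (a b c : ℤ) :
    S ⟨a,b,c⟩ = (S lamM)^c * ((S yM)^b * (S xM)^a) := by
  rw [triple_decomp a b c, hmul, hmul, anti_zpow hmul, anti_zpow hmul, anti_zpow hmul]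

lemma anti_lam (hmul : ∀ g h, S (g * h) = S h * S g) {X Y : M}
    (hx : S xM = X) (hy : S yM = Y) :
    S lamM = ⟨0, 0, Y.a*X.b - X.a*Y.b⟩ := by
  have he : lamM = xM⁻¹ * yM⁻¹ * xM * yM := by decide
  rw [he, hmul, hmul, hmul, anti_inv hmul, anti_inv hmul, hx, hy]
  ext <;> simp [mul_def, inv_def] <;> ring

end Anti

end HeisAux

namespace HeisAux

/-- Classification of trace-zero involutions in GL₂(ℤ): conjugate to diag(1,-1) or to the swap. -/
lemma matClassAux : ∀ (n : ℕ) (p q r : ℤ), q.natAbs ≤ n → p^2 + q*r = 1 →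
    ∃ b11 b12 b21 b22 : ℤ,
      (b11*b22 - b12*b21 = 1 ∨ b11*b22 - b12*b21 = -1) ∧
      ((p*b11 + q*b21 = b11 ∧ r*b11 - p*b21 = b21 ∧
        p*b12 + q*b22 = -b12 ∧ r*b12 - p*b22 = -b22) ∨
       (p*b11 + q*b21 = b12 ∧ r*b11 - p*b21 = b22 ∧
        p*b12 + q*b22 = b11 ∧ r*b12 - p*b22 = b21)) := by
  intro n
  induction n using Nat.strong_induction_on with
  | _ n ih =>
    intro p q r hqn h
    by_cases hq0 : q = 0
    · subst hq0
      have hp : p = 1 ∨ p = -1 := by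
        have hpp : p * p = 1 := by nlinarith
        exact mul_self_eq_one_iff.mp hpp
      rcases Int.even_or_odd r with ⟨k, hk⟩ | ⟨k, hk⟩
      · rcases hp with rfl | rfl
        · exact ⟨1, 0, k, 1, Or.inl (by ring),
            Or.inl ⟨by ring, by omega, by ring, by ring⟩⟩
        · exact ⟨0, 1, 1, -k, Or.inr (by ring),
            Or.inl ⟨by ring, by ring, by ring, by omega⟩⟩
      · rcases hp with rfl | rfl
        · exact ⟨1, 1, k, k+1, Or.inl (by ring),
            Or.inr ⟨by ring, by omega, by ring, by omega⟩⟩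
        · exact ⟨1, -1, -k, k+1, Or.inl (by ring),
            Or.inr ⟨by ring, by omega, by ring, by omega⟩⟩
    · by_cases hq1 : q = 1 ∨ q = -1
      · refine ⟨0, q, 1, -p, ?_, Or.inr ⟨by ring, by ring, by ring, by linarith⟩⟩
        rcases hq1 with rfl | rfl
        · right; ring
        · left; ring
      · -- |q| ≥ 2 : reduce
        have hq1a : q ≠ 1 := fun hh => hq1 (Or.inl hh)
        have hq1b : q ≠ -1 := fun hh => hq1 (Or.inr hh)
        have hq2 : 2 ≤ |q| := by
          have h0 := abs_nonneg q
          rcases abs_choice q with hh | hh <;> rw [hh] at h0 ⊢ <;> omega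
        -- find k with 4*(p+q*k)^2 ≤ q^2
        obtain ⟨k, hb⟩ : ∃ k : ℤ, 4*(p + q*k)^2 ≤ q^2 := by
          have hQpos : (0:ℤ) < |q| := by omega
          have hm0 : 0 ≤ p % |q| := Int.emod_nonneg p (ne_of_gt hQpos)
          have hm1 : p % |q| < |q| := Int.emod_lt_of_pos p hQpos
          have hdiv : |q| * (p / |q|) + p % |q| = p := Int.mul_ediv_add_emod p |q|
          have hqq : q^2 = |q|^2 := (sq_abs q).symm
          rcases abs_choice q with hh | hh
          · -- |q| = q
            by_cases h2m : 2*(p % |q|) ≤ |q|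
            · refine ⟨-(p / |q|), ?_⟩
              have : p + q * (-(p / |q|)) = p % |q| := by
                linear_combination (p / |q|) * hh - hdiv
              rw [this, hqq]; nlinarith
            · refine ⟨-(p / |q|) - 1, ?_⟩
              have : p + q * (-(p / |q|) - 1) = p % |q| - |q| := by
                linear_combination (p / |q| + 1) * hh - hdiv
              rw [this, hqq]; nlinarith
          · -- |q| = -q
            by_cases h2m : 2*(p % |q|) ≤ |q|
            · refine ⟨p / |q|, ?_⟩
              have : p + q * (p / |q|) = p % |q| := by
                linear_combination (p / |q|) * hh - hdiv
              rw [this, hqq]; nlinarith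
            · refine ⟨p / |q| + 1, ?_⟩
              have : p + q * (p / |q| + 1) = p % |q| - |q| := by
                linear_combination (p / |q| + 1) * hh - hdiv
              rw [this, hqq]; nlinarith
        set p1 := p + q*k with hp1
        set r1 := r - 2*p*k - q*k^2 with hr1
        have h1 : (-p1)^2 + r1*q = 1 := by rw [hp1, hr1]; linear_combination h
        have hq4 : 4 ≤ q^2 := by nlinarith [sq_abs q]
        have hqr1 : q*r1 = 1 - p1^2 := by linear_combination h1
        have hrb : r1^2 < q^2 := by nlinarith [sq_nonneg (q*r1), sq_nonneg p1, sq_nonneg (q^2 - 4*p1^2)]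
        have hnat : r1.natAbs < q.natAbs := by
          have habs : |r1| < |q| := by
            nlinarith [abs_nonneg r1, abs_nonneg q, sq_abs r1, sq_abs q]
          rw [Int.abs_eq_natAbs, Int.abs_eq_natAbs] at habs
          exact_mod_cast habs
        obtain ⟨c11, c12, c21, c22, hdet2, hDJ2⟩ :=
          ih r1.natAbs (lt_of_lt_of_le hnat hqn) (-p1) r1 q le_rfl h1
        refine ⟨c21, c22, c11 + k*c21, c12 + k*c22, ?_, ?_⟩
        · rcases hdet2 with hd | hd
          · right; linear_combination -hd
          · left; linear_combination -hd
        · rcases hDJ2 with ⟨H1, H2, H3, H4⟩ | ⟨H1, H2, H3, H4⟩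
          · refine Or.inl ⟨?_, ?_, ?_, ?_⟩
            · linear_combination H2
            · linear_combination H1 + k*H2
            · linear_combination H4
            · linear_combination H3 + k*H4
          · refine Or.inr ⟨?_, ?_, ?_, ?_⟩
            · linear_combination H2
            · linear_combination H1 + k*H2
            · linear_combination H4
            · linear_combination H3 + k*H4

end HeisAux

namespace HeisAux

/-- recover the first two coordinates of `Ψ.symm z` from those of `z`. -/
lemma PhiEquiv_symm_ab (p q r s u v : ℤ) (hdet : p*s - q*r = 1 ∨ p*s - q*r = -1)
    (z : M) (A B : ℤ) (h1 : z.a = p*A + q*B) (h2 : z.b = r*A + s*B) :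
    ((PhiEquiv p q r s u v hdet).symm z).a = A ∧ ((PhiEquiv p q r s u v hdet).symm z).b = B := by
  set w := (PhiEquiv p q r s u v hdet).symm z with hw
  have happ := (PhiEquiv p q r s u v hdet).apply_symm_apply z
  rw [← hw, PhiEquiv_apply] at happ
  have g1 : p*w.a + q*w.b = z.a := congrArg M.a happ
  have g2 : r*w.a + s*w.b = z.b := congrArg M.b happ
  have k1 : (p*s - q*r) * (w.a - A) = 0 := by
    linear_combination s*g1 + s*h1 - q*g2 - q*h2
  have k2 : (p*s - q*r) * (w.b - B) = 0 := by
    linear_combination p*g2 + p*h2 - r*g1 - r*h1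
  constructor
  · rcases hdet with hd | hd <;> rw [hd] at k1 <;> linarith
  · rcases hdet with hd | hd <;> rw [hd] at k2 <;> linarith

/-- first two coordinates of `S ⟨α,β,0⟩`. -/
lemma S_ab {S : M → M} (hmul : ∀ g h, S (g * h) = S h * S g)
    {p r u q s v : ℤ} (hx : S xM = ⟨p,r,u⟩) (hy : S yM = ⟨q,s,v⟩) (α β : ℤ) :
    (S ⟨α,β,(0:ℤ)⟩).a = p*α + q*β ∧ (S ⟨α,β,(0:ℤ)⟩).b = r*α + s*β := by
  have hlam := anti_lam hmul hx hy
  rw [anti_triple hmul, hlam, hx, hy]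
  constructor <;> simp [zpow_def, mul_def] <;> ring

end HeisAux

namespace HeisAux

lemma lam_x (m : ℤ) : lamM ^ m * xM = ⟨1, 0, m⟩ := by
  ext <;> simp [zpow_def, mul_def, lamM, xM]

lemma lam_y (m : ℤ) : lamM ^ m * yM = ⟨0, 1, m⟩ := by
  ext <;> simp [zpow_def, mul_def, lamM, yM]

lemma lam_yinv (m : ℤ) : lamM ^ m * yM⁻¹ = ⟨0, -1, m⟩ := by
  ext <;> simp [zpow_def, mul_def, inv_def, lamM, yM]

lemma xM_inv : xM⁻¹ = (⟨-1, 0, 0⟩ : M) := by ext <;> simp [inv_def, xM]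
lemma yM_inv : yM⁻¹ = (⟨0, -1, 0⟩ : M) := by ext <;> simp [inv_def, yM]

theorem model_class (S : M → M) (hmul : ∀ g h : M, S (g*h) = S h * S g)
    (hSS : ∀ g, S (S g) = g) :
    ∃ Ψ : M ≃* M,
      (∃ m n : ℤ, Ψ (S (Ψ.symm xM)) = lamM^m * xM ∧ Ψ (S (Ψ.symm yM)) = lamM^n * yM) ∨
      (Ψ (S (Ψ.symm xM)) = xM⁻¹ ∧ Ψ (S (Ψ.symm yM)) = yM⁻¹) ∨
      (∃ m : ℤ, Ψ (S (Ψ.symm xM)) = xM ∧ Ψ (S (Ψ.symm yM)) = lamM^m * yM⁻¹) ∨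
      (∃ m : ℤ, Ψ (S (Ψ.symm xM)) = lamM^m * yM ∧ Ψ (S (Ψ.symm yM)) = lamM^(-m) * xM) := by
  obtain ⟨p, r, u, hx⟩ : ∃ p r u, S xM = ⟨p, r, u⟩ := ⟨_, _, _, rfl⟩
  obtain ⟨q, s, v, hy⟩ : ∃ q s v, S yM = ⟨q, s, v⟩ := ⟨_, _, _, rfl⟩
  have hlam : S lamM = ⟨0, 0, q*r - p*s⟩ := anti_lam hmul hx hy
  have hx2 : S ⟨p, r, u⟩ = xM := by rw [← hx]; exact hSS xM
  have hy2 : S ⟨q, s, v⟩ = yM := by rw [← hy]; exact hSS yM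
  have E1 : p*p + q*r = 1 := by
    have h := (S_ab hmul hx hy p r).1
    have h2 : (S ⟨p,r,(0:ℤ)⟩).a = (S ⟨p,r,u⟩).a := by
      have : (⟨p,r,u⟩ : M) = ⟨p,r,0⟩ * lamM ^ u := by
        ext <;> simp [zpow_def, mul_def, lamM]
      rw [this, hmul, anti_zpow hmul, hlam]
      simp [zpow_def, mul_def]
    rw [h2, hx2] at h
    have h' : (1:ℤ) = p*p + q*r := by simpa [xM] using h
    linarith
  have E2 : r*(p + s) = 0 := by
    have h := (S_ab hmul hx hy p r).2
    have h2 : (S ⟨p,r,(0:ℤ)⟩).b = (S ⟨p,r,u⟩).b := by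
      have : (⟨p,r,u⟩ : M) = ⟨p,r,0⟩ * lamM ^ u := by
        ext <;> simp [zpow_def, mul_def, lamM]
      rw [this, hmul, anti_zpow hmul, hlam]
      simp [zpow_def, mul_def]
    rw [h2, hx2] at h
    have h' : (0:ℤ) = r*p + s*r := by simpa [xM] using h
    linear_combination -h'
  have E4 : q*(p + s) = 0 := by
    have h := (S_ab hmul hx hy q s).1
    have h2 : (S ⟨q,s,(0:ℤ)⟩).a = (S ⟨q,s,v⟩).a := by
      have : (⟨q,s,v⟩ : M) = ⟨q,s,0⟩ * lamM ^ v := by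
        ext <;> simp [zpow_def, mul_def, lamM]
      rw [this, hmul, anti_zpow hmul, hlam]
      simp [zpow_def, mul_def]
    rw [h2, hy2] at h
    have h' : (0:ℤ) = p*q + q*s := by simpa [yM] using h
    linear_combination -h'
  have E5 : s*s + q*r = 1 := by
    have h := (S_ab hmul hx hy q s).2
    have h2 : (S ⟨q,s,(0:ℤ)⟩).b = (S ⟨q,s,v⟩).b := by
      have : (⟨q,s,v⟩ : M) = ⟨q,s,0⟩ * lamM ^ v := by
        ext <;> simp [zpow_def, mul_def, lamM]
      rw [this, hmul, anti_zpow hmul, hlam]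
      simp [zpow_def, mul_def]
    rw [h2, hy2] at h
    have h' : (1:ℤ) = r*q + s*s := by simpa [yM] using h
    linarith
  by_cases hps : p + s = 0
  · -- trace zero case
    have hs : s = -p := by linarith
    subst hs
    obtain ⟨b11, b12, b21, b22, hdetB, hDJ⟩ :=
      matClassAux q.natAbs p q r le_rfl (by linear_combination E1)
    refine ⟨(PhiEquiv b11 b12 b21 b22 0 0 hdetB).symm, ?_⟩
    set Φeq := PhiEquiv b11 b12 b21 b22 0 0 hdetB with hΦ
    have hΦx : Φeq xM = ⟨b11, b21, 0⟩ := by rw [hΦ, PhiEquiv_apply, Phi_x]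
    have hΦy : Φeq yM = ⟨b12, b22, 0⟩ := by rw [hΦ, PhiEquiv_apply, Phi_y]
    have hS'mul : ∀ g h : M, Φeq.symm (S (Φeq (g*h)))
        = Φeq.symm (S (Φeq h)) * Φeq.symm (S (Φeq g)) := by
      intro g h; rw [map_mul, hmul, map_mul]
    have hS'SS : ∀ g : M, Φeq.symm (S (Φeq (Φeq.symm (S (Φeq g))))) = g := by
      intro g; rw [MulEquiv.apply_symm_apply, hSS, MulEquiv.symm_apply_apply]
    simp only [MulEquiv.symm_symm]
    rcases hDJ with ⟨hD1, hD2, hD3, hD4⟩ | ⟨hJ1, hJ2, hJ3, hJ4⟩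
    · -- D case : type III
      right; right; left
      have habx := S_ab hmul hx hy b11 b21
      have haby := S_ab hmul hx hy b12 b22
      have hsx := PhiEquiv_symm_ab b11 b12 b21 b22 0 0 hdetB (S ⟨b11,b21,0⟩) 1 0
        (by rw [habx.1]; linear_combination hD1) (by rw [habx.2]; linear_combination hD2)
      have hsy := PhiEquiv_symm_ab b11 b12 b21 b22 0 0 hdetB (S ⟨b12,b22,0⟩) 0 (-1)
        (by rw [haby.1]; linear_combination hD3) (by rw [haby.2]; linear_combination hD4)
      have hS'x : Φeq.symm (S (Φeq xM)) = ⟨1, 0, (Φeq.symm (S ⟨b11,b21,0⟩)).c⟩ := by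
        rw [hΦx]
        ext
        · exact hsx.1
        · exact hsx.2
        · rfl
      have hS'y : Φeq.symm (S (Φeq yM)) = ⟨0, -1, (Φeq.symm (S ⟨b12,b22,0⟩)).c⟩ := by
        rw [hΦy]
        ext
        · exact hsy.1
        · exact hsy.2
        · rfl
      set c1 := (Φeq.symm (S ⟨b11,b21,(0:ℤ)⟩)).c with hc1
      set c2 := (Φeq.symm (S ⟨b12,b22,(0:ℤ)⟩)).c with hc2
      have hS'lam : Φeq.symm (S (Φeq lamM)) = ⟨0, 0, 1⟩ := by
        rw [anti_lam (S := fun m => Φeq.symm (S (Φeq m))) hS'mul hS'x hS'y]; norm_num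
      have hcon := hS'SS xM
      rw [hS'x, anti_triple (S := fun m => Φeq.symm (S (Φeq m))) hS'mul, hS'lam, hS'x, hS'y] at hcon
      have hc10 : c1 = 0 := by
        have h3 := congrArg M.c hcon
        simp [zpow_def, mul_def, inv_def, one_def, xM] at h3
        omega
      refine ⟨c2, ?_, ?_⟩
      · rw [hS'x, hc10]; rfl
      · rw [hS'y, lam_yinv]
    · -- J case : type IV
      right; right; right
      have habx := S_ab hmul hx hy b11 b21
      have haby := S_ab hmul hx hy b12 b22
      have hsx := PhiEquiv_symm_ab b11 b12 b21 b22 0 0 hdetB (S ⟨b11,b21,0⟩) 0 1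
        (by rw [habx.1]; linear_combination hJ1) (by rw [habx.2]; linear_combination hJ2)
      have hsy := PhiEquiv_symm_ab b11 b12 b21 b22 0 0 hdetB (S ⟨b12,b22,0⟩) 1 0
        (by rw [haby.1]; linear_combination hJ3) (by rw [haby.2]; linear_combination hJ4)
      have hS'x : Φeq.symm (S (Φeq xM)) = ⟨0, 1, (Φeq.symm (S ⟨b11,b21,0⟩)).c⟩ := by
        rw [hΦx]
        ext
        · exact hsx.1
        · exact hsx.2
        · rfl
      have hS'y : Φeq.symm (S (Φeq yM)) = ⟨1, 0, (Φeq.symm (S ⟨b12,b22,0⟩)).c⟩ := by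
        rw [hΦy]
        ext
        · exact hsy.1
        · exact hsy.2
        · rfl
      set c1 := (Φeq.symm (S ⟨b11,b21,(0:ℤ)⟩)).c with hc1
      set c2 := (Φeq.symm (S ⟨b12,b22,(0:ℤ)⟩)).c with hc2
      have hS'lam : Φeq.symm (S (Φeq lamM)) = ⟨0, 0, 1⟩ := by
        rw [anti_lam (S := fun m => Φeq.symm (S (Φeq m))) hS'mul hS'x hS'y]; norm_num
      have hcon := hS'SS xM
      rw [hS'x, anti_triple (S := fun m => Φeq.symm (S (Φeq m))) hS'mul, hS'lam, hS'x, hS'y] at hcon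
      have hc2c1 : c2 = -c1 := by
        have h3 := congrArg M.c hcon
        simp [zpow_def, mul_def, inv_def, one_def, xM] at h3
        omega
      refine ⟨c1, ?_, ?_⟩
      · rw [hS'x, lam_y]
      · rw [hS'y, hc2c1, lam_x]
  · -- p + s ≠ 0 : scalar case
    have hr0 : r = 0 := by
      rcases mul_eq_zero.mp E2 with h | h
      · exact h
      · exact absurd h hps
    have hq0 : q = 0 := by
      rcases mul_eq_zero.mp E4 with h | h
      · exact h
      · exact absurd h hps
    subst hr0; subst hq0
    have hp : p = 1 ∨ p = -1 := mul_self_eq_one_iff.mp (by linarith)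
    have hss : s = 1 ∨ s = -1 := mul_self_eq_one_iff.mp (by linarith)
    have hps' : p = s := by rcases hp with rfl | rfl <;> rcases hss with rfl | rfl <;> omega
    refine ⟨MulEquiv.refl M, ?_⟩
    simp only [MulEquiv.refl_apply, MulEquiv.refl_symm]
    rcases hp with rfl | rfl
    · -- identity case : type I
      left
      have hs1 : s = 1 := by omega
      subst hs1
      exact ⟨u, v, by rw [hx, lam_x], by rw [hy, lam_y]⟩
    · -- -identity case : type II
      right; left
      have hs1 : s = -1 := by omega
      subst hs1
      have hu0 : u = 0 := by
        have hcon := hx2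
        rw [anti_triple hmul, hlam, hx, hy] at hcon
        have h3 := congrArg M.c hcon
        simp [zpow_def, mul_def, inv_def, one_def, xM] at h3
        omega
      have hv0 : v = 0 := by
        have hcon := hy2
        rw [anti_triple hmul, hlam, hx, hy] at hcon
        have h3 := congrArg M.c hcon
        simp [zpow_def, mul_def, inv_def, one_def, yM] at h3
        omega
      subst hu0; subst hv0
      exact ⟨by rw [hx, xM_inv], by rw [hy, yM_inv]⟩

end HeisAux


open HeisAux

theorem heisenberg_involution_classification
    (star : Heisenberg → Heisenberg)
    (hstar_mul : ∀ g h : Heisenberg, star (g * h) = star h * star g)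
    (hstar_invol : ∀ g : Heisenberg, star (star g) = g) :
    ∃ φ : MulAut Heisenberg,
      (∃ m n : ℤ, φ (star (φ.symm Hx)) = Hlam ^ m * Hx ∧
        φ (star (φ.symm Hy)) = Hlam ^ n * Hy) ∨
      (φ (star (φ.symm Hx)) = Hx⁻¹ ∧ φ (star (φ.symm Hy)) = Hy⁻¹) ∨
      (∃ m : ℤ, φ (star (φ.symm Hx)) = Hx ∧ φ (star (φ.symm Hy)) = Hlam ^ m * Hy⁻¹) ∨
      (∃ m : ℤ, φ (star (φ.symm Hx)) = Hlam ^ m * Hy ∧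
        φ (star (φ.symm Hy)) = Hlam ^ (-m) * Hx) := by
  set S : M → M := fun m => eH (star (eH.symm m)) with hSdef
  have hSmul : ∀ g h : M, S (g * h) = S h * S g := by
    intro g h
    simp only [hSdef]
    rw [map_mul, hstar_mul, map_mul]
  have hSS : ∀ m : M, S (S m) = m := by
    intro m
    simp only [hSdef]
    rw [MulEquiv.symm_apply_apply, hstar_invol, MulEquiv.apply_symm_apply]
  obtain ⟨Ψ, hcase⟩ := model_class S hSmul hSS
  refine ⟨(eH.trans Ψ).trans eH.symm, ?_⟩
  have key : ∀ h : Heisenberg,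
      ((eH.trans Ψ).trans eH.symm) (star ((((eH.trans Ψ).trans eH.symm)).symm h))
        = eH.symm (Ψ (S (Ψ.symm (eH h)))) := by
    intro h
    simp only [hSdef, MulEquiv.trans_apply, MulEquiv.symm_trans_apply, MulEquiv.symm_symm,
      MulEquiv.apply_symm_apply]
  rcases hcase with ⟨m, n, hX, hY⟩ | ⟨hX, hY⟩ | ⟨m, hX, hY⟩ | ⟨m, hX, hY⟩
  · exact Or.inl ⟨m, n,
      by rw [key Hx, eH_x, hX, map_mul, map_zpow, eH_symm_lam, eH_symm_x],
      by rw [key Hy, eH_y, hY, map_mul, map_zpow, eH_symm_lam, eH_symm_y]⟩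
  · exact Or.inr (Or.inl ⟨
      by rw [key Hx, eH_x, hX, map_inv, eH_symm_x],
      by rw [key Hy, eH_y, hY, map_inv, eH_symm_y]⟩)
  · exact Or.inr (Or.inr (Or.inl ⟨m,
      by rw [key Hx, eH_x, hX, eH_symm_x],
      by rw [key Hy, eH_y, hY, map_mul, map_zpow, map_inv, eH_symm_lam, eH_symm_y]⟩))
  · exact Or.inr (Or.inr (Or.inr ⟨m,
      by rw [key Hx, eH_x, hX, map_mul, map_zpow, eH_symm_lam, eH_symm_y],
      by rw [key Hy, eH_y, hY, map_mul, map_zpow, eH_symm_lam, eH_symm_x]⟩))
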